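/- The generalized fibonomial coefficient with negative real upper argument satisfies {−α choose k}_{s,t} = (−1)^k · (−t)^{−αk − C(k,2)} · {α+k−1 choose k}_{s,t} for all real α and natural k, where C(k,2) = k(k−1)/2. -/

import Mathlib

noncomputable section
open Real

/-- Generalized Fibonacci function {α} = (φ^α − φ'^α)/(φ − φ'). -/
def genFibFun (φ φ' : ℝ) (α : ℝ) : ℝ := (φ ^ α - φ' ^ α) / (φ - φ')

def fibtorial (φ φ' : ℝ) (n : ℕ) : ℝ := ∏ j ∈ Finset.range n, genFibFun φ φ' (j + 1)

/-- Generalized fibonomial coefficient {α choose k} = {α}{α−1}⋯{α−k+1}/{k}!. -/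
def genFibonomial (φ φ' : ℝ) (α : ℝ) (k : ℕ) : ℝ :=
  (∏ j ∈ Finset.range k, genFibFun φ φ' (α - j)) / fibtorial φ φ' k

lemma genFibFun_neg_arg (φ φ' : ℝ) (hφ : 0 < φ) (hφ' : 0 < φ') (x : ℝ) :
    genFibFun φ φ' (-x) = -((φ * φ') ^ (-x)) * genFibFun φ φ' x := by
  unfold genFibFun
  rw [Real.mul_rpow hφ.le hφ'.le, Real.rpow_neg hφ.le, Real.rpow_neg hφ'.le]
  have h1 : φ ^ x ≠ 0 := (Real.rpow_pos_of_pos hφ x).ne'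
  have h2 : φ' ^ x ≠ 0 := (Real.rpow_pos_of_pos hφ' x).ne'
  rcases eq_or_ne (φ - φ') 0 with h | h
  · simp [h]
  · field_simp
    ring

theorem genFibonomial_neg (s t : ℝ) (hs : 0 < s) (ht : t < 0)
    (hdisc : s ^ 2 + 4 * t > 0) (φ φ' : ℝ)
    (hφ : φ = (s + Real.sqrt (s ^ 2 + 4 * t)) / 2)
    (hφ' : φ' = (s - Real.sqrt (s ^ 2 + 4 * t)) / 2)
    (α : ℝ) (k : ℕ) (hnz : fibtorial φ φ' k ≠ 0) :
    genFibonomial φ φ' (-α) k =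
      (-1 : ℝ) ^ k * (-t) ^ (-(α * k) - (k * (k - 1) / 2 : ℕ) : ℝ) *
        genFibonomial φ φ' (α + k - 1) k := by
  have hd : 0 < Real.sqrt (s ^ 2 + 4 * t) := Real.sqrt_pos.mpr hdisc
  have hdlt : Real.sqrt (s ^ 2 + 4 * t) < s := by
    have : Real.sqrt (s ^ 2 + 4 * t) < Real.sqrt (s ^ 2) := by
      apply Real.sqrt_lt_sqrt hdisc.le; nlinarith
    rwa [Real.sqrt_sq hs.le] at this
  have hφpos : 0 < φ := by rw [hφ]; positivity
  have hφ'pos : 0 < φ' := by rw [hφ']; linarith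
  have hprod : φ * φ' = -t := by
    have hsq : Real.sqrt (s ^ 2 + 4 * t) ^ 2 = s ^ 2 + 4 * t :=
      Real.sq_sqrt hdisc.le
    rw [hφ, hφ']; nlinarith [hsq]
  have hmt : (0 : ℝ) < -t := by linarith
  have key : (∏ j ∈ Finset.range k, genFibFun φ φ' (-α - j)) =
      (-1 : ℝ) ^ k * (-t) ^ (-(α * k) - (k * (k - 1) / 2 : ℕ) : ℝ) *
        ∏ j ∈ Finset.range k, genFibFun φ φ' (α + k - 1 - j) := by
    have step1 : (∏ j ∈ Finset.range k, genFibFun φ φ' (-α - j)) =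
        ∏ j ∈ Finset.range k,
          ((-1) * (-t) ^ (-(α + j)) * genFibFun φ φ' (α + j)) := by
      refine Finset.prod_congr rfl fun j _ => ?_
      have : (-α - j : ℝ) = -(α + j) := by ring
      rw [this, genFibFun_neg_arg φ φ' hφpos hφ'pos, hprod]; ring
    rw [step1, Finset.prod_mul_distrib, Finset.prod_mul_distrib]
    have step2 : (∏ j ∈ Finset.range k, (-t) ^ (-(α + (j : ℝ)))) =
        (-t) ^ (-(α * k) - (k * (k - 1) / 2 : ℕ) : ℝ) := by
      rw [← Real.rpow_sum_of_pos hmt]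
      congr 1
      rw [Finset.sum_neg_distrib, Finset.sum_add_distrib, Finset.sum_const,
        Finset.card_range]
      have : (∑ j ∈ Finset.range k, (j : ℝ)) = ((k * (k - 1) / 2 : ℕ) : ℝ) := by
        rw [← Nat.cast_sum, Finset.sum_range_id]
      rw [this]; push_cast; ring
    have step3 : (∏ j ∈ Finset.range k, genFibFun φ φ' (α + j)) =
        ∏ j ∈ Finset.range k, genFibFun φ φ' (α + k - 1 - j) := by
      rw [← Finset.prod_range_reflect (fun j => genFibFun φ φ' (α + k - 1 - j)) k]
      refine Finset.prod_congr rfl fun j hj => ?_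
      have hjk : j < k := Finset.mem_range.mp hj
      congr 1
      have h1 : ((k - 1 - j : ℕ) : ℝ) = (k : ℝ) - 1 - j := by
        have : k - 1 - j = k - (1 + j) := by omega
        rw [this, Nat.cast_sub (by omega)]
        push_cast; ring
      rw [h1]; ring
    rw [step2, step3]
    simp
  unfold genFibonomial
  rw [key]
  ring
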